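/- Let t₁, t₂, t₃ ∈ (-1,1) with t₁ + t₂ + t₃ + t₁t₂t₃ > 0. Then t₁ + t₂ + t₃ + t₁t₂t₃ < arctanh(t₁) + arctanh(t₂) + arctanh(t₃). -/

import Mathlib

noncomputable def arctanh (x : ℝ) : ℝ := (1/2) * Real.log ((1+x)/(1-x))

lemma artanh_neg (a : ℝ) : arctanh (-a) = - arctanh a := by
  unfold arctanh
  rw [← mul_neg, ← Real.log_inv, inv_div]
  congr 2
  ring

lemma artanh_add (a b : ℝ) (ha : a ∈ Set.Ioo (-1:ℝ) 1) (hb : b ∈ Set.Ioo (-1:ℝ) 1) :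
    arctanh a + arctanh b = arctanh ((a+b)/(1+a*b)) := by
  obtain ⟨ha1, ha2⟩ := ha; obtain ⟨hb1, hb2⟩ := hb
  have h1a : (0:ℝ) < 1 + a := by linarith
  have h2a : (0:ℝ) < 1 - a := by linarith
  have h1b : (0:ℝ) < 1 + b := by linarith
  have h2b : (0:ℝ) < 1 - b := by linarith
  have hab : (0:ℝ) < 1 + a*b := by nlinarith
  unfold arctanh
  rw [← mul_add, ← Real.log_mul (by positivity) (by positivity)]
  congr 2
  have hne : (1 + a*b) - (a+b) ≠ 0 := by nlinarith
  field_simp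
  ring

lemma artanh_hasDerivAt {x : ℝ} (hx : x ∈ Set.Ioo (-1:ℝ) 1) :
    HasDerivAt arctanh (1/(1-x^2)) x := by
  obtain ⟨hx1, hx2⟩ := hx
  have h1 : (0:ℝ) < 1 + x := by linarith
  have h2 : (0:ℝ) < 1 - x := by linarith
  have d1 : HasDerivAt (fun y : ℝ => Real.log (1+y)) (1/(1+x)) x := by
    have := (Real.hasDerivAt_log h1.ne').comp x (((hasDerivAt_id x).const_add 1))
    simpa [Function.comp_def] using this
  have d2 : HasDerivAt (fun y : ℝ => Real.log (1-y)) (-(1/(1-x))) x := by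
    have h : HasDerivAt (fun y : ℝ => 1 - y) (-1) x := by
      exact ((hasDerivAt_id x).const_sub 1)
    have := (Real.hasDerivAt_log h2.ne').comp x h
    simpa [Function.comp_def] using this
  have d3 : HasDerivAt (fun y : ℝ => (1/2) * (Real.log (1+y) - Real.log (1-y)))
      ((1/2) * (1/(1+x) - -(1/(1-x)))) x := (d1.sub d2).const_mul _
  have heq : (fun y : ℝ => (1/2) * (Real.log (1+y) - Real.log (1-y))) =ᶠ[nhds x] arctanh := by
    filter_upwards [Ioo_mem_nhds hx1 hx2] with y hy
    obtain ⟨hy1, hy2⟩ := hy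
    unfold arctanh
    rw [Real.log_div (by linarith) (by linarith)]
  have := d3.congr_of_eventuallyEq heq.symm
  refine this.congr_deriv ?_
  have h3 : (1:ℝ) - x^2 ≠ 0 := by nlinarith
  field_simp
  ring

lemma artanh_cubic {t : ℝ} (ht : t ∈ Set.Ioo (0:ℝ) 1) : t + t^3/3 < arctanh t := by
  set F : ℝ → ℝ := fun y => arctanh y - y - y^3/3 with hF
  have hD : ∀ x ∈ Set.Ioo (-1:ℝ) 1, HasDerivAt F (1/(1-x^2) - 1 - x^2) x := by
    intro x hx
    have := ((artanh_hasDerivAt hx).sub (hasDerivAt_id x)).sub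
      (((hasDerivAt_pow 3 x).div_const 3))
    refine this.congr_deriv ?_
    push_cast
    ring
  have hmono : StrictMonoOn F (Set.Ico (0:ℝ) 1) := by
    apply strictMonoOn_of_deriv_pos (convex_Ico 0 1)
    · intro x hx
      exact ((hD x ⟨by linarith [hx.1], hx.2⟩).differentiableAt).continuousAt.continuousWithinAt
    · intro x hx
      rw [interior_Ico] at hx
      obtain ⟨hx1, hx2⟩ := hx
      rw [(hD x ⟨by linarith, hx2⟩).deriv]
      have h2 : (0:ℝ) < 1 - x^2 := by nlinarith
      have : 1/(1-x^2) - 1 - x^2 = x^4/(1-x^2) := by field_simp; ring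
      rw [this]
      positivity
  have h0 : F 0 < F t := hmono ⟨le_refl 0, one_pos⟩ ⟨ht.1.le, ht.2⟩ ht.1
  have hz : arctanh 0 = 0 := by simp [arctanh]
  simp only [hF, hz] at h0
  linarith

lemma artanh_lt {t : ℝ} (ht : t ∈ Set.Ioo (0:ℝ) 1) : t < arctanh t := by
  have := artanh_cubic ht
  nlinarith [pow_pos ht.1 3]

lemma artanh_cubic' {t : ℝ} (ht : t ∈ Set.Ico (0:ℝ) 1) : t + t^3/3 ≤ arctanh t := by
  rcases eq_or_lt_of_le ht.1 with h | h
  · simp [← h, arctanh]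
  · exact (artanh_cubic ⟨h, ht.2⟩).le

lemma artanh_gap {a b : ℝ} (ha : a ∈ Set.Ioo (-1:ℝ) 1) (hb : b ∈ Set.Ioo (-1:ℝ) 1)
    (hab : a < b) : b - a < arctanh b - arctanh a := by
  obtain ⟨ha1, ha2⟩ := ha; obtain ⟨hb1, hb2⟩ := hb
  rcases le_or_gt 0 (a*b) with hab0 | hab0
  · have hd0 : (0:ℝ) < 1 - a*b := by nlinarith [sq_nonneg (a-b), sq_nonneg (a+b)]
    set d := (b - a)/(1 - a*b) with hdd
    have hd1 : 0 < d := div_pos (by linarith) hd0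
    have hd2 : d < 1 := by
      rw [hdd, div_lt_one hd0]; nlinarith
    have key : arctanh b - arctanh a = arctanh d := by
      have h := artanh_add b (-a) ⟨hb1, hb2⟩ ⟨by linarith, by linarith⟩
      rw [artanh_neg a] at h
      have harg : (b + -a)/(1 + b*(-a)) = d := by rw [hdd]; ring_nf
      rw [harg] at h
      linarith [h]
    rw [key]
    have h1 : d < arctanh d := artanh_lt ⟨hd1, hd2⟩
    have h2 : b - a = d * (1 - a*b) := by rw [hdd, div_mul_cancel₀ _ hd0.ne']
    nlinarith
  · have ha0 : a < 0 := by nlinarith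
    have hb0 : 0 < b := by nlinarith
    have h1 : b < arctanh b := artanh_lt ⟨hb0, hb2⟩
    have h2 : -a < arctanh (-a) := artanh_lt ⟨by linarith, by linarith⟩
    rw [artanh_neg a] at h2
    linarith

lemma mixed (a b x : ℝ) (ha : a ∈ Set.Ioo (-1:ℝ) 1) (hb : b ∈ Set.Ioo (-1:ℝ) 1)
    (hx : x ∈ Set.Ioo (-1:ℝ) 1) (hab : a*b ≤ 0)
    (hpos : 0 < a + b + x + a*b*x) :
    a + b + x + a*b*x < arctanh a + arctanh b + arctanh x := by
  obtain ⟨ha1, ha2⟩ := ha; obtain ⟨hb1, hb2⟩ := hb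
  have hc : (0:ℝ) < 1 + a*b := by nlinarith [sq_nonneg (a+b), sq_nonneg (a-b)]
  set u := (a+b)/(1+a*b) with huu
  have hu : u ∈ Set.Ioo (-1:ℝ) 1 := by
    constructor
    · rw [huu, lt_div_iff₀ hc]; nlinarith
    · rw [huu, div_lt_one hc]; nlinarith
  have hadd := artanh_add a b ⟨ha1, ha2⟩ ⟨hb1, hb2⟩
  have hux : u + x = (a+b+x+a*b*x)/(1+a*b) := by
    rw [huu]; field_simp; ring
  have hxpos : 0 < u + x := by rw [hux]; exact div_pos hpos hc
  have hnu : -u ∈ Set.Ioo (-1:ℝ) 1 := ⟨by linarith [hu.2], by linarith [hu.1]⟩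
  have hgap := artanh_gap hnu hx (by linarith)
  rw [artanh_neg u] at hgap
  -- hgap : x - (-u) < arctanh x - (- arctanh u)
  have hS : a+b+x+a*b*x = (1+a*b)*(u+x) := by
    rw [hux]; field_simp
  nlinarith [hgap, hS, hxpos, hc]

theorem stmt_2 (t1 t2 t3 : ℝ) (h1 : t1 ∈ Set.Ioo (-1:ℝ) 1) (h2 : t2 ∈ Set.Ioo (-1:ℝ) 1)
    (h3 : t3 ∈ Set.Ioo (-1:ℝ) 1) (hpos : 0 < t1 + t2 + t3 + t1*t2*t3) :
    t1 + t2 + t3 + t1*t2*t3 < arctanh t1 + arctanh t2 + arctanh t3 := by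
  by_cases hall : 0 ≤ t1 ∧ 0 ≤ t2 ∧ 0 ≤ t3
  · obtain ⟨p1, p2, p3⟩ := hall
    have e1 := artanh_cubic' ⟨p1, h1.2⟩
    have e2 := artanh_cubic' ⟨p2, h2.2⟩
    have e3 := artanh_cubic' ⟨p3, h3.2⟩
    have hcube : t1^3 + t2^3 + t3^3 ≥ 3*(t1*t2*t3) := by
      nlinarith [sq_nonneg (t1-t2), sq_nonneg (t2-t3), sq_nonneg (t1-t3),
        mul_nonneg (mul_nonneg p1 p2) p3, add_nonneg (add_nonneg p1 p2) p3,
        mul_nonneg p1 p2, mul_nonneg p2 p3, mul_nonneg p1 p3]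
    have hex : 0 < t1 ∨ 0 < t2 ∨ 0 < t3 := by
      by_contra h
      push_neg at h
      obtain ⟨q1, q2, q3⟩ := h
      have z1 : t1 = 0 := le_antisymm q1 p1
      have z2 : t2 = 0 := le_antisymm q2 p2
      have z3 : t3 = 0 := le_antisymm q3 p3
      rw [z1, z2, z3] at hpos
      norm_num at hpos
    rcases hex with h | h | h
    · have := artanh_cubic ⟨h, h1.2⟩; linarith
    · have := artanh_cubic ⟨h, h2.2⟩; linarith
    · have := artanh_cubic ⟨h, h3.2⟩; linarith
  · push_neg at hall
    -- some variable is negative; some must be positive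
    have hnotall : ¬ (t1 ≤ 0 ∧ t2 ≤ 0 ∧ t3 ≤ 0) := by
      rintro ⟨q1, q2, q3⟩
      nlinarith [mul_nonneg (neg_nonneg.mpr q1) (neg_nonneg.mpr q2),
        mul_nonpos_of_nonneg_of_nonpos (mul_nonneg (neg_nonneg.mpr q1) (neg_nonneg.mpr q2)) q3]
    -- find a mixed pair and apply `mixed`
    rcases lt_or_ge t1 0 with n1 | p1
    · rcases lt_or_ge t2 0 with n2 | p2
      · -- t1,t2 < 0 so t3 > 0 : pair (t1,t3)
        have n3 : 0 < t3 := by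
          by_contra hq; push_neg at hq; exact hnotall ⟨n1.le, n2.le, hq⟩
        have key := mixed t1 t3 t2 h1 h3 h2
          (mul_nonpos_of_nonpos_of_nonneg n1.le n3.le) (by nlinarith)
        nlinarith [key]
      · -- t1 < 0 ≤ t2 : pair (t1,t2), third t3
        have key := mixed t1 t2 t3 h1 h2 h3
          (mul_nonpos_of_nonpos_of_nonneg n1.le p2) (by nlinarith)
        nlinarith [key]
    · rcases lt_or_ge t2 0 with n2 | p2
      · -- t2 < 0 ≤ t1 : pair (t2,t1), third t3
        have key := mixed t2 t1 t3 h2 h1 h3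
          (mul_nonpos_of_nonpos_of_nonneg n2.le p1) (by nlinarith)
        nlinarith [key]
      · -- t1,t2 ≥ 0 so t3 < 0 : pair (t3,t1), third t2
        have n3 : t3 < 0 := hall p1 p2
        have key := mixed t3 t1 t2 h3 h1 h2
          (mul_nonpos_of_nonpos_of_nonneg n3.le p1) (by nlinarith)
        nlinarith [key]
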